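/- Let u ∈ ℝ^d, ‖u‖₂ = 1, and define for φ ∈ 𝒮(ℝ^d): J_u^* φ(r) = ∫_{⟨r,u⟩}^∞ φ(p_{u⊥}(r) + τu) dτ if ⟨r,u⟩ ≥ 0, and J_u^* φ(r) = -∫_{-∞}^{⟨r,u⟩} φ(p_{u⊥}(r) + τu) dτ if ⟨r,u⟩ < 0, where p_{u⊥}(r) = r - ⟨r,u⟩u. Then for every α > 1 there is a constant C_α such that for all φ with ‖φ‖_{∞,α} := sup_r (1+‖r‖₂^α)|φ(r)| < ∞, one has ‖J_u^* φ‖_{∞,α-1} ≤ C_α ‖φ‖_{∞,α}. -/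

import Mathlib

open MeasureTheory

open Set Real Filter


lemma deriv_aux (c α : ℝ) (hc : 0 < c) (hα : 1 < α) {τ : ℝ} (hτ : 0 ≤ τ) :
    HasDerivAt (fun t : ℝ => (2/(1-α)) * ((c+t)/2)^(1-α)) (((c+τ)/2)^(-α)) τ := by
  have hx : (0:ℝ) < (c+τ)/2 := by positivity
  have h1 : HasDerivAt (fun t : ℝ => (c+t)/2) (1/2) τ := by
    simpa using ((hasDerivAt_id τ).const_add c).div_const 2
  have h2 := (Real.hasDerivAt_rpow_const (x := (c+τ)/2) (p := 1-α)
    (Or.inl hx.ne')).comp τ h1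
  have h3 := h2.const_mul (2/(1-α))
  refine h3.congr_deriv ?_
  have h4 : (1-α) - 1 = -α := by ring
  rw [h4]
  have h0 : (1:ℝ) - α ≠ 0 := by linarith
  field_simp

lemma tail_int (c α : ℝ) (hc : 0 < c) (hα : 1 < α) :
    IntegrableOn (fun τ : ℝ => ((c+τ)/2)^(-α)) (Ioi (0:ℝ)) ∧
    ∫ τ in Ioi (0:ℝ), ((c+τ)/2)^(-α) = (2/(α-1)) * (c/2)^(1-α) := by
  set F : ℝ → ℝ := fun t => (2/(1-α)) * ((c+t)/2)^(1-α) with hF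
  have hcont : ContinuousWithinAt F (Ici 0) 0 :=
    (deriv_aux c α hc hα le_rfl).continuousAt.continuousWithinAt
  have hderiv : ∀ x ∈ Ioi (0:ℝ), HasDerivAt F (((c+x)/2)^(-α)) x :=
    fun x hx => deriv_aux c α hc hα (le_of_lt hx)
  have hpos : ∀ x ∈ Ioi (0:ℝ), 0 ≤ ((c+x)/2)^(-α) := fun x hx => rpow_nonneg (by have := mem_Ioi.mp hx; positivity) _
  have hlim : Tendsto F atTop (nhds 0) := by
    have h1 : Tendsto (fun t : ℝ => (c+t)/2) atTop atTop :=
      (tendsto_atTop_add_const_left _ c tendsto_id).atTop_div_const (by norm_num)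
    have h2 : Tendsto (fun x : ℝ => x ^ (1-α)) atTop (nhds 0) := by
      have := tendsto_rpow_neg_atTop (y := α - 1) (by linarith)
      simpa [neg_sub] using this
    have := ((h2.comp h1).const_mul (2/(1-α)))
    simpa using this
  constructor
  · exact integrableOn_Ioi_deriv_of_nonneg hcont hderiv hpos hlim
  · rw [integral_Ioi_of_hasDerivAt_of_nonneg hcont hderiv hpos hlim]
    have : F 0 = (2/(1-α)) * (c/2)^(1-α) := by simp [hF]
    rw [this]
    have hα1 : (1:ℝ) - α ≠ 0 := by linarith
    have hα2 : α - 1 ≠ 0 := by linarith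
    field_simp
    ring


lemma pt_bound (R α : ℝ) {τ : ℝ} (hx : 0 < (R+τ)/2) :
    (1 + ((R+τ)/2)^α)⁻¹ ≤ ((R+τ)/2)^(-α) := by
  rw [Real.rpow_neg hx.le]
  exact inv_anti₀ (rpow_pos_of_pos hx α) (by nlinarith)

lemma integ_dom (R α : ℝ) (hR : 0 ≤ R) (hα : 1 < α) :
    IntegrableOn (fun τ : ℝ => (1 + ((R+τ)/2)^α)⁻¹) (Ioi (0:ℝ)) := by
  have hmeas : Measurable fun τ : ℝ => (1 + ((R+τ)/2)^α)⁻¹ := by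
    apply Measurable.inv
    exact (measurable_const.add (((measurable_const.add measurable_id).div_const 2).pow_const α))
  have h1 : IntegrableOn (fun τ : ℝ => (1 + ((R+τ)/2)^α)⁻¹) (Ioc (0:ℝ) 2) := by
    apply Measure.integrableOn_of_bounded (M := 1)
    · simp [Real.volume_Ioc]
    · exact hmeas.aestronglyMeasurable
    · refine (ae_restrict_iff' measurableSet_Ioc).2 (Filter.Eventually.of_forall fun τ hτ => ?_)
      have hτ0 : 0 < τ := hτ.1
      have hx : (0:ℝ) ≤ (R+τ)/2 := by positivity
      have hp : (0:ℝ) < 1 + ((R+τ)/2)^α := by positivity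
      rw [Real.norm_eq_abs, abs_of_pos (inv_pos.2 hp)]
      have h1le : (1:ℝ) ≤ 1 + ((R+τ)/2)^α := by nlinarith [Real.rpow_nonneg hx α]
      exact inv_le_one_of_one_le₀ h1le
  have h2 : IntegrableOn (fun τ : ℝ => (1 + ((R+τ)/2)^α)⁻¹) (Ioi (2:ℝ)) := by
    have hi : IntegrableOn (fun t : ℝ => (2:ℝ)^α * t^(-α)) (Ioi (2:ℝ)) :=
      (integrableOn_Ioi_rpow_of_lt (by linarith) (by norm_num)).const_mul _
    refine hi.mono' hmeas.aestronglyMeasurable ?_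
    refine (ae_restrict_iff' measurableSet_Ioi).2 (Filter.Eventually.of_forall fun τ hτ => ?_)
    have hτ0 : (2:ℝ) < τ := hτ
    have hx : (0:ℝ) < (R+τ)/2 := by positivity
    have hp : (0:ℝ) < 1 + ((R+τ)/2)^α := by positivity
    rw [Real.norm_eq_abs, abs_of_pos (inv_pos.2 hp)]
    calc (1 + ((R+τ)/2)^α)⁻¹ ≤ ((R+τ)/2)^(-α) := pt_bound R α hx
      _ ≤ (τ/2)^(-α) := Real.rpow_le_rpow_of_nonpos (by linarith) (by linarith) (by linarith)
      _ = (2:ℝ)^α * τ^(-α) := by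
          rw [Real.div_rpow (by linarith) (by norm_num), Real.rpow_neg (by norm_num : (0:ℝ) ≤ 2),
            div_inv_eq_mul]
          ring
  have hu : Ioc (0:ℝ) 2 ∪ Ioi 2 = Ioi 0 := Set.Ioc_union_Ioi_eq_Ioi (by norm_num)
  rw [← hu]
  exact h1.union h2



lemma core (α : ℝ) (hα : 1 < α) (R : ℝ) (hR : 0 ≤ R) :
    (1 + R^(α-1)) * ∫ τ in Ioi (0:ℝ), (1 + ((R+τ)/2)^α)⁻¹
      ≤ (1 + 2^(α-1)) * (2 + 2/(α-1)) := by
  have hα0 : (0:ℝ) < α - 1 := by linarith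
  have h2pow : (0:ℝ) ≤ 2^(α-1) := Real.rpow_nonneg (by norm_num) _
  rcases le_or_gt R 2 with hR2 | hR2
  · -- R ≤ 2
    have hmono : ∫ τ in Ioi (0:ℝ), (1 + ((R+τ)/2)^α)⁻¹
        ≤ ∫ τ in Ioi (0:ℝ), (1 + (τ/2)^α)⁻¹ := by
      have hi0 : IntegrableOn (fun τ : ℝ => (1 + (τ/2)^α)⁻¹) (Ioi (0:ℝ)) := by
        have := integ_dom 0 α le_rfl hα
        simpa only [zero_add] using this
      refine setIntegral_mono_on (integ_dom R α hR hα) hi0 measurableSet_Ioi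
        (fun τ hτ => ?_)
      have hτ0 : (0:ℝ) < τ := hτ
      have h1 : (τ/2)^α ≤ ((R+τ)/2)^α :=
        Real.rpow_le_rpow (by positivity) (by linarith) (by linarith)
      exact inv_anti₀ (by positivity) (by linarith)
    have hsplit : ∫ τ in Ioi (0:ℝ), (1 + (τ/2)^α)⁻¹ ≤ 2 + 2/(α-1) := by
      have hi0 : IntegrableOn (fun τ : ℝ => (1 + (τ/2)^α)⁻¹) (Ioi (0:ℝ)) := by
        simpa only [zero_add] using integ_dom 0 α le_rfl hα
      have hu : Ioc (0:ℝ) 2 ∪ Ioi 2 = Ioi 0 := Set.Ioc_union_Ioi_eq_Ioi (by norm_num)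
      have hiA : IntegrableOn (fun τ : ℝ => (1 + (τ/2)^α)⁻¹) (Ioc (0:ℝ) 2) :=
        hi0.mono_set (by rw [← hu]; exact subset_union_left)
      have hiB : IntegrableOn (fun τ : ℝ => (1 + (τ/2)^α)⁻¹) (Ioi (2:ℝ)) :=
        hi0.mono_set (by rw [← hu]; exact subset_union_right)
      have heq : ∫ τ in Ioi (0:ℝ), (1 + (τ/2)^α)⁻¹
          = (∫ τ in Ioc (0:ℝ) 2, (1 + (τ/2)^α)⁻¹) + ∫ τ in Ioi (2:ℝ), (1 + (τ/2)^α)⁻¹ := by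
        rw [← hu, setIntegral_union (Set.Ioc_disjoint_Ioi le_rfl) measurableSet_Ioi hiA hiB]
      rw [heq]
      have hA : ∫ τ in Ioc (0:ℝ) 2, (1 + (τ/2)^α)⁻¹ ≤ 2 := by
        have : ∫ τ in Ioc (0:ℝ) 2, (1 + (τ/2)^α)⁻¹ ≤ ∫ _ in Ioc (0:ℝ) 2, (1:ℝ) := by
          refine setIntegral_mono_on hiA (integrableOn_const (by
            simp [Real.volume_Ioc])) measurableSet_Ioc (fun τ hτ => ?_)
          have hτ0 : (0:ℝ) < τ := hτ.1
          have : (0:ℝ) ≤ (τ/2)^α := Real.rpow_nonneg (by positivity) _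
          have hp : (1:ℝ) ≤ 1 + (τ/2)^α := by linarith
          exact inv_le_one_of_one_le₀ hp
        calc _ ≤ ∫ _ in Ioc (0:ℝ) 2, (1:ℝ) := this
          _ = 2 := by simp [Real.volume_Ioc]
      have hB : ∫ τ in Ioi (2:ℝ), (1 + (τ/2)^α)⁻¹ ≤ 2/(α-1) := by
        have hib : IntegrableOn (fun t : ℝ => (2:ℝ)^α * t^(-α)) (Ioi (2:ℝ)) :=
          (integrableOn_Ioi_rpow_of_lt (by linarith) (by norm_num)).const_mul _
        have hle : ∫ τ in Ioi (2:ℝ), (1 + (τ/2)^α)⁻¹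
            ≤ ∫ τ in Ioi (2:ℝ), (2:ℝ)^α * τ^(-α) := by
          refine setIntegral_mono_on hiB hib measurableSet_Ioi (fun τ hτ => ?_)
          have hτ0 : (2:ℝ) < τ := hτ
          have hx : (0:ℝ) < (0+τ)/2 := by positivity
          calc (1 + (τ/2)^α)⁻¹ = (1 + ((0+τ)/2)^α)⁻¹ := by rw [zero_add]
            _ ≤ ((0+τ)/2)^(-α) := pt_bound 0 α hx
            _ = (τ/2)^(-α) := by rw [zero_add]
            _ = (2:ℝ)^α * τ^(-α) := by
                rw [Real.div_rpow (by linarith) (by norm_num),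
                  Real.rpow_neg (by norm_num : (0:ℝ) ≤ 2), div_inv_eq_mul]
                ring
        have hcomp : ∫ τ in Ioi (2:ℝ), (2:ℝ)^α * τ^(-α) = 2/(α-1) := by
          rw [integral_const_mul, integral_Ioi_rpow_of_lt (by linarith) (by norm_num)]
          have key : (2:ℝ)^α * (2:ℝ)^(-α+1) = 2 := by
            rw [← Real.rpow_add (by norm_num)]
            norm_num
          have hne : α - 1 ≠ 0 := by linarith
          have hne' : -α + 1 ≠ 0 := by intro h; apply hne; linarith
          calc (2:ℝ)^α * (-(2:ℝ)^(-α+1)/(-α+1))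
              = ((2:ℝ)^α * (2:ℝ)^(-α+1))/(α-1) := by field_simp; ring
            _ = 2/(α-1) := by rw [key]
        linarith
      linarith
    have hfac : 1 + R^(α-1) ≤ 1 + 2^(α-1) := by
      have := Real.rpow_le_rpow hR hR2 (le_of_lt hα0)
      linarith
    have hnn : 0 ≤ ∫ τ in Ioi (0:ℝ), (1 + ((R+τ)/2)^α)⁻¹ :=
      setIntegral_nonneg measurableSet_Ioi (fun τ hτ => by have h0 := Set.mem_Ioi.mp hτ; positivity)
    have hnn2 : (0:ℝ) ≤ 1 + R^(α-1) := by
      have := Real.rpow_nonneg hR (α-1); linarith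
    exact mul_le_mul hfac (hmono.trans hsplit) hnn (by linarith)
  · -- 2 < R
    have hRpos : (0:ℝ) < R := by linarith
    have e1 : ∫ τ in Ioi (0:ℝ), (1 + ((R+τ)/2)^α)⁻¹ ≤ (2/(α-1)) * (R/2)^(1-α) := by
      have := (tail_int R α hRpos hα)
      rw [← this.2]
      refine setIntegral_mono_on (integ_dom R α hR hα) this.1 measurableSet_Ioi
        (fun τ hτ => ?_)
      have hτ0 : (0:ℝ) < τ := hτ
      exact pt_bound R α (by positivity)
    have e2 : R^(α-1) * (R/2)^(1-α) = 2^(α-1) := by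
      have ha : R^(α-1) ≠ 0 := (Real.rpow_pos_of_pos hRpos _).ne'
      have hb : ((2:ℝ)^(α-1)) ≠ 0 := by positivity
      rw [Real.div_rpow hRpos.le (by norm_num), show (1-α:ℝ) = -(α-1) by ring,
        Real.rpow_neg hRpos.le, Real.rpow_neg (by norm_num : (0:ℝ) ≤ 2)]
      field_simp
    have e3 : (R/2)^(1-α) ≤ 1 :=
      Real.rpow_le_one_of_one_le_of_nonpos (by linarith) (by linarith)
    have hnn2 : (0:ℝ) ≤ 1 + R^(α-1) := by
      have := Real.rpow_nonneg hR (α-1); linarith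
    have step : (1 + R^(α-1)) * ∫ τ in Ioi (0:ℝ), (1 + ((R+τ)/2)^α)⁻¹
        ≤ (1 + R^(α-1)) * ((2/(α-1)) * (R/2)^(1-α)) :=
      mul_le_mul_of_nonneg_left e1 hnn2
    have expand : (1 + R^(α-1)) * ((2/(α-1)) * (R/2)^(1-α))
        = (2/(α-1)) * ((R/2)^(1-α) + 2^(α-1)) := by
      rw [← e2]; ring
    have final : (2/(α-1)) * ((R/2)^(1-α) + 2^(α-1)) ≤ (1 + 2^(α-1)) * (2 + 2/(α-1)) := by
      have h1 : (2/(α-1)) * ((R/2)^(1-α) + 2^(α-1)) ≤ (2/(α-1)) * (1 + 2^(α-1)) := by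
        apply mul_le_mul_of_nonneg_left (by linarith) (by positivity)
      have h2 : (2/(α-1)) * (1 + 2^(α-1)) ≤ (2 + 2/(α-1)) * (1 + 2^(α-1)) := by
        apply mul_le_mul_of_nonneg_right (by linarith [div_nonneg (by norm_num : (0:ℝ) ≤ 2) hα0.le]) (by linarith)
      linarith [h1, h2, mul_comm (2 + 2/(α-1)) (1 + 2^(α-1))]
    linarith



lemma key (α : ℝ) (hα : 1 < α) (M R s : ℝ) (ψ : ℝ → ℝ) (hM : 0 ≤ M) (hs : 0 ≤ s)
    (hR : 0 ≤ R) (hb : ∀ τ ∈ Ioi s, |ψ τ| ≤ M * (1 + ((R+τ)/2)^α)⁻¹) :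
    (1 + R^(α-1)) * |∫ τ in Ioi s, ψ τ| ≤ ((1 + 2^(α-1)) * (2 + 2/(α-1))) * M := by
  have hg : IntegrableOn (fun τ : ℝ => M * (1 + ((R+τ)/2)^α)⁻¹) (Ioi (0:ℝ)) :=
    (integ_dom R α hR hα).const_mul M
  have hgs : IntegrableOn (fun τ : ℝ => M * (1 + ((R+τ)/2)^α)⁻¹) (Ioi s) :=
    hg.mono_set (Ioi_subset_Ioi hs)
  have hnng : ∀ᵐ τ ∂(volume.restrict (Ioi (0:ℝ))),
      0 ≤ M * (1 + ((R+τ)/2)^α)⁻¹ := by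
    refine (ae_restrict_iff' measurableSet_Ioi).2 (Filter.Eventually.of_forall fun τ hτ => ?_)
    have h0 := Set.mem_Ioi.mp hτ
    positivity
  have h1 : |∫ τ in Ioi s, ψ τ| ≤ ∫ τ in Ioi s, M * (1 + ((R+τ)/2)^α)⁻¹ := by
    calc |∫ τ in Ioi s, ψ τ| ≤ ∫ τ in Ioi s, |ψ τ| := by
          simpa [Real.norm_eq_abs] using
            norm_integral_le_integral_norm (μ := volume.restrict (Ioi s)) ψ
      _ ≤ ∫ τ in Ioi s, M * (1 + ((R+τ)/2)^α)⁻¹ :=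
          integral_mono_of_nonneg (Filter.Eventually.of_forall fun τ => abs_nonneg _) hgs
            ((ae_restrict_iff' measurableSet_Ioi).2 (Filter.Eventually.of_forall hb))
  have h2 : ∫ τ in Ioi s, M * (1 + ((R+τ)/2)^α)⁻¹
      ≤ ∫ τ in Ioi (0:ℝ), M * (1 + ((R+τ)/2)^α)⁻¹ :=
    setIntegral_mono_set hg hnng (HasSubset.Subset.eventuallyLE (Ioi_subset_Ioi hs))
  have h3 : ∫ τ in Ioi (0:ℝ), M * (1 + ((R+τ)/2)^α)⁻¹
      = M * ∫ τ in Ioi (0:ℝ), (1 + ((R+τ)/2)^α)⁻¹ := integral_const_mul M _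
  have hnn2 : (0:ℝ) ≤ 1 + R^(α-1) := by
    have := Real.rpow_nonneg hR (α-1); linarith
  calc (1 + R^(α-1)) * |∫ τ in Ioi s, ψ τ|
      ≤ (1 + R^(α-1)) * (M * ∫ τ in Ioi (0:ℝ), (1 + ((R+τ)/2)^α)⁻¹) := by
        apply mul_le_mul_of_nonneg_left _ hnn2
        rw [← h3]; exact h1.trans h2
    _ = M * ((1 + R^(α-1)) * ∫ τ in Ioi (0:ℝ), (1 + ((R+τ)/2)^α)⁻¹) := by ring
    _ ≤ M * ((1 + 2^(α-1)) * (2 + 2/(α-1))) :=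
        mul_le_mul_of_nonneg_left (core α hα R hR) hM
    _ = ((1 + 2^(α-1)) * (2 + 2/(α-1))) * M := by ring


noncomputable def Jstar (d : ℕ) (u : EuclideanSpace ℝ (Fin d))
    (φ : EuclideanSpace ℝ (Fin d) → ℝ) (r : EuclideanSpace ℝ (Fin d)) : ℝ :=
  if 0 ≤ (inner ℝ r u : ℝ) then
    ∫ τ in Set.Ioi (inner ℝ r u : ℝ), φ (r - (inner ℝ r u : ℝ) • u + τ • u)
  else
    -∫ τ in Set.Iio (inner ℝ r u : ℝ), φ (r - (inner ℝ r u : ℝ) • u + τ • u)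

theorem stmt14 (d : ℕ) (u : EuclideanSpace ℝ (Fin d)) (hu : ‖u‖ = 1)
    (α : ℝ) (hα : 1 < α) :
    ∃ C : ℝ, 0 < C ∧
      ∀ (φ : EuclideanSpace ℝ (Fin d) → ℝ), Continuous φ →
        ∀ M : ℝ, (∀ r, (1 + ‖r‖ ^ α) * |φ r| ≤ M) →
          ∀ r, (1 + ‖r‖ ^ (α - 1)) * |Jstar d u φ r| ≤ C * M := by
  have hα0 : (0:ℝ) < α - 1 := by linarith
  refine ⟨(1 + 2^(α-1)) * (2 + 2/(α-1)), by positivity, ?_⟩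
  intro φ hφc M hφM r
  have hM : 0 ≤ M := by
    refine le_trans ?_ (hφM 0)
    positivity
  set s : ℝ := (inner ℝ r u : ℝ) with hsdef
  set p : EuclideanSpace ℝ (Fin d) := r - s • u with hpdef
  have hpu : (inner ℝ p u : ℝ) = 0 := by
    rw [hpdef, inner_sub_left, real_inner_smul_left, real_inner_self_eq_norm_mul_norm, hu,
      ← hsdef]
    ring
  have hnormsq : ∀ τ : ℝ, ‖p + τ • u‖^2 = ‖p‖^2 + τ^2 := by
    intro τ
    rw [norm_add_sq_real, real_inner_smul_right, hpu, norm_smul, hu]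
    simp [sq_abs]
  have hrp : r = p + s • u := by simp [hpdef]
  have hr2 : ‖r‖^2 = ‖p‖^2 + s^2 := by rw [hrp]; exact hnormsq s
  have hR : (0:ℝ) ≤ ‖r‖ := norm_nonneg r
  -- lower bound on the norm along the line
  have hlow : ∀ τ : ℝ, |s| ≤ |τ| → (‖r‖ + |τ|)/2 ≤ ‖p + τ • u‖ := by
    intro τ hτ
    have h1 : ‖p + τ • u‖^2 = ‖p‖^2 + τ^2 := hnormsq τ
    have h2 : (‖r‖ + |τ|)^2 ≤ 4 * ‖p + τ • u‖^2 := by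
      have hs2 : s^2 ≤ τ^2 := by
        have := sq_abs s; have := sq_abs τ
        nlinarith [abs_nonneg s, abs_nonneg τ]
      nlinarith [sq_abs τ, sq_nonneg (‖r‖ - |τ|), abs_nonneg τ]
    nlinarith [norm_nonneg (p + τ • u), abs_nonneg τ]
  -- pointwise bound on φ along the line
  have hptw : ∀ τ : ℝ, |s| ≤ |τ| →
      |φ (p + τ • u)| ≤ M * (1 + ((‖r‖ + |τ|)/2)^α)⁻¹ := by
    intro τ hτ
    set x := p + τ • u
    have hx : (0:ℝ) ≤ ‖x‖ := norm_nonneg x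
    have hposx : (0:ℝ) < 1 + ‖x‖^α := by positivity
    have h1 : |φ x| ≤ M * (1 + ‖x‖^α)⁻¹ := by
      rw [← div_eq_mul_inv, le_div_iff₀ hposx, mul_comm]
      exact hφM x
    have h2 : ((‖r‖ + |τ|)/2)^α ≤ ‖x‖^α :=
      Real.rpow_le_rpow (by positivity) (hlow τ hτ) (by linarith)
    have h3 : (1 + ‖x‖^α)⁻¹ ≤ (1 + ((‖r‖ + |τ|)/2)^α)⁻¹ := by
      apply inv_anti₀ (by positivity) (by linarith)
    calc |φ x| ≤ M * (1 + ‖x‖^α)⁻¹ := h1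
      _ ≤ M * (1 + ((‖r‖ + |τ|)/2)^α)⁻¹ := mul_le_mul_of_nonneg_left h3 hM
  have hsR : |s| ≤ ‖r‖ := by nlinarith [sq_abs s, abs_nonneg s, sq_nonneg ‖p‖]
  rw [Jstar]
  simp only [← hsdef, ← hpdef]
  by_cases hcase : 0 ≤ s
  · rw [if_pos hcase]
    have := key α hα M ‖r‖ s (fun τ => φ (p + τ • u)) hM hcase hR (by
      intro τ hτ
      have hτ0 : s < τ := hτ
      have habs : |τ| = τ := abs_of_pos (lt_of_le_of_lt hcase hτ0)
      have := hptw τ (by rw [habs, abs_of_nonneg hcase]; exact hτ0.le)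
      rwa [habs] at this)
    exact this
  · rw [if_neg hcase]
    push_neg at hcase
    have hIio : ∫ τ in Iio s, φ (p + τ • u) = ∫ τ in Ioi (-s), φ (p + (-τ) • u) := by
      rw [← integral_Iic_eq_integral_Iio]
      have := integral_comp_neg_Iic s (fun τ : ℝ => φ (p + (-τ) • u))
      simpa using this
    have hkey := key α hα M ‖r‖ (-s) (fun τ => φ (p + (-τ) • u)) hM (by linarith) hR (by
      intro τ hτ
      have hτ0 : -s < τ := hτ
      have hτpos : 0 < τ := lt_trans (by linarith) hτ0
      have habs : |(-τ)| = τ := by rw [abs_neg, abs_of_pos hτpos]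
      have := hptw (-τ) (by rw [habs, abs_of_neg hcase]; linarith)
      rwa [habs] at this)
    rw [abs_neg, hIio]
    exact hkey
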